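/- With ζ_n = ∫_d^{log n} exp(−n^{d/(2α+d)}) dα, there exist constants c₁, c₂ > 0 and N such that c₁ log n ≤ ζ_n ≤ c₂ log n for all n ≥ N; i.e., ζ_n ≍ log n. -/

import Mathlib

open MeasureTheory

theorem stmt_16 (d : ℕ) (hd : 1 ≤ d) :
    ∃ c₁ c₂ : ℝ, 0 < c₁ ∧ 0 < c₂ ∧ ∃ N : ℕ, ∀ n : ℕ, N ≤ n → 3 ≤ n →
      c₁ * Real.log n ≤
        (∫ α in Set.Ioc (d : ℝ) (Real.log n),
          Real.exp (-(n : ℝ) ^ ((d : ℝ) / (2 * α + d)))) ∧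
      (∫ α in Set.Ioc (d : ℝ) (Real.log n),
          Real.exp (-(n : ℝ) ^ ((d : ℝ) / (2 * α + d)))) ≤ c₂ * Real.log n := by
  refine ⟨Real.exp (-Real.exp d) / 2, 1, by positivity, one_pos, ⌈Real.exp (2 * d)⌉₊, ?_⟩
  intro n hN h3
  have hdpos : (0:ℝ) < d := by exact_mod_cast hd
  have hd1 : (1:ℝ) ≤ (d:ℝ) := by exact_mod_cast hd
  have hn0 : (0:ℝ) < n := by positivity
  have hnreal : Real.exp (2 * d) ≤ (n : ℝ) := by
    calc Real.exp (2 * d) ≤ (⌈Real.exp (2 * d)⌉₊ : ℝ) := Nat.le_ceil _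
    _ ≤ (n : ℝ) := by exact_mod_cast hN
  set L := Real.log n with hL
  have hL2d : 2 * d ≤ L := by
    have := Real.log_le_log (Real.exp_pos _) hnreal
    rwa [Real.log_exp] at this
  have hLpos : 0 < L := lt_of_lt_of_le (by positivity) hL2d
  have hdL : (d : ℝ) ≤ L := le_trans (by linarith) hL2d
  set f : ℝ → ℝ := fun α => Real.exp (-(n : ℝ) ^ ((d : ℝ) / (2 * α + d))) with hf
  -- continuity / integrability on Icc d L
  have hcont : ContinuousOn f (Set.Icc (d:ℝ) L) := by
    apply Real.continuous_exp.comp_continuousOn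
    apply ContinuousOn.neg
    refine ContinuousOn.rpow continuousOn_const
      (ContinuousOn.div continuousOn_const
        (((continuous_const.mul continuous_id).add continuous_const).continuousOn)
        (fun x hx => by
          have h1 : (d:ℝ) ≤ x := hx.1
          exact ne_of_gt (by linarith)))
      (fun x hx => Or.inl (ne_of_gt hn0))
  have hint : IntegrableOn f (Set.Ioc (d:ℝ) L) :=
    (hcont.integrableOn_Icc).mono_set Set.Ioc_subset_Icc_self
  have hfpos : ∀ x, 0 < f x := fun x => Real.exp_pos _
  constructor
  · -- lower bound
    have hsub : Set.Ioc (L/2) L ⊆ Set.Ioc (d:ℝ) L := by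
      apply Set.Ioc_subset_Ioc_left; linarith
    have hint2 : IntegrableOn f (Set.Ioc (L/2) L) := hint.mono_set hsub
    have hbound : ∀ x ∈ Set.Ioc (L/2) L, Real.exp (-Real.exp d) ≤ f x := by
      intro x hx
      have hx1 : L / 2 < x := hx.1
      have hden : (0:ℝ) < 2 * x + d := by linarith
      have hrpow : (n:ℝ) ^ ((d : ℝ) / (2 * x + d)) ≤ Real.exp d := by
        rw [Real.rpow_def_of_pos hn0]
        apply Real.exp_le_exp.2
        rw [mul_comm, div_mul_eq_mul_div, div_le_iff₀ hden]
        have : L ≤ 2 * x + d := by linarith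
        nlinarith
      simp only [hf]
      exact Real.exp_le_exp.2 (by linarith)
    calc Real.exp (-Real.exp d) / 2 * L
        = Real.exp (-Real.exp d) * (L - L/2) := by ring
      _ = ∫ _ in Set.Ioc (L/2) L, Real.exp (-Real.exp d) := by
          rw [setIntegral_const, Real.volume_real_Ioc_of_le (by linarith), smul_eq_mul, mul_comm]
      _ ≤ ∫ x in Set.Ioc (L/2) L, f x := by
          apply setIntegral_mono_on (integrableOn_const (by simp) (by simp)) hint2
            measurableSet_Ioc hbound
      _ ≤ ∫ x in Set.Ioc (d:ℝ) L, f x := by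
          apply setIntegral_mono_set hint
            (Filter.Eventually.of_forall fun x => (hfpos x).le)
            (HasSubset.Subset.eventuallyLE hsub)
  · -- upper bound
    calc (∫ x in Set.Ioc (d:ℝ) L, f x)
        ≤ ∫ _ in Set.Ioc (d:ℝ) L, (1:ℝ) := by
          apply setIntegral_mono_on hint (integrableOn_const (by simp) (by simp))
            measurableSet_Ioc
          intro x hx
          simp only [hf]
          calc Real.exp (-(n : ℝ) ^ ((d : ℝ) / (2 * x + d))) ≤ Real.exp 0 := by
                apply Real.exp_le_exp.2
                have hden : (0:ℝ) < 2 * x + d := by have h1 := hx.1; linarith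
                have : (0:ℝ) ≤ (n:ℝ) ^ ((d : ℝ) / (2 * x + d)) := Real.rpow_nonneg hn0.le _
                linarith
            _ = 1 := Real.exp_zero
      _ = L - d := by
          rw [setIntegral_const, Real.volume_real_Ioc_of_le (by linarith), smul_eq_mul, mul_one]
      _ ≤ 1 * L := by linarith
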